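/- For each n ≥ 7 and admissible k, the map i ↦ i+1 (mod n) and the map i ↦ n-i (mod n) are automorphisms of T_{n,1,k}, generating a subgroup isomorphic to the dihedral group D_n of order 2n that acts transitively on the set of faces of T_{n,1,k}. -/

import Mathlib

/-- The faces of the triangulation `T_{n,1,k}` of the torus. -/
def Tfaces (n k : ℕ) : Set (Finset (ZMod n)) :=
  {F | ∃ i : ZMod n,
    F = ({i, i + (k : ZMod n), i + (k : ZMod n) + 1} : Finset (ZMod n)) ∨
    F = ({i, i + 1, i + (k : ZMod n) + 1} : Finset (ZMod n))}

/-- A permutation of the vertices is an automorphism of `T_{n,1,k}` when it preserves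
the set of faces. -/
def IsAuto (n k : ℕ) (f : Equiv.Perm (ZMod n)) : Prop :=
  ∀ F : Finset (ZMod n), F ∈ Tfaces n k ↔ F.image f ∈ Tfaces n k

section Aux

variable {n k : ℕ}

lemma triple_congr {α} [DecidableEq α] {a b c a' b' c' : α} (h1 : a = a') (h2 : b = b')
    (h3 : c = c') : ({a, b, c} : Finset α) = {a', b', c'} := by rw [h1, h2, h3]

lemma triple_comm {α} [DecidableEq α] (a b c : α) : ({a, b, c} : Finset α) = {c, b, a} := by
  ext x; simp; tauto

lemma image_add (c : ZMod n) (F : Finset (ZMod n)) (h : F ∈ Tfaces n k) :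
    F.image (Equiv.addRight c) ∈ Tfaces n k := by
  obtain ⟨i, h | h⟩ := h <;> subst h <;> refine ⟨i + c, ?_⟩
  · exact Or.inl (by
      simp only [Finset.image_insert, Finset.image_singleton, Equiv.coe_addRight]
      exact triple_congr (by ring) (by ring) (by ring))
  · exact Or.inr (by
      simp only [Finset.image_insert, Finset.image_singleton, Equiv.coe_addRight]
      exact triple_congr (by ring) (by ring) (by ring))

lemma image_neg (F : Finset (ZMod n)) (h : F ∈ Tfaces n k) :
    F.image (Equiv.neg (ZMod n)) ∈ Tfaces n k := by
  obtain ⟨i, h | h⟩ := h <;> subst h <;> refine ⟨-i - k - 1, ?_⟩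
  · refine Or.inr ?_
    simp only [Finset.image_insert, Finset.image_singleton, Equiv.neg_apply]
    rw [triple_comm]
    exact triple_congr (by ring) (by ring) (by ring)
  · refine Or.inl ?_
    simp only [Finset.image_insert, Finset.image_singleton, Equiv.neg_apply]
    rw [triple_comm]
    exact triple_congr (by ring) (by ring) (by ring)

lemma pow_addRight (m : ℕ) :
    (Equiv.addRight (1 : ZMod n)) ^ m = Equiv.addRight (m : ZMod n) := by
  induction m with
  | zero => ext x; simp
  | succ m ih => ext x; simp [pow_succ, ih, Equiv.Perm.mul_apply]; ring

lemma addRight_mem [NeZero n] (c : ZMod n) :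
    Equiv.addRight c ∈
      Subgroup.closure ({Equiv.addRight (1 : ZMod n), Equiv.neg (ZMod n)} :
        Set (Equiv.Perm (ZMod n))) := by
  have h : Equiv.addRight c = (Equiv.addRight (1 : ZMod n)) ^ c.val := by
    rw [pow_addRight, ZMod.natCast_val, ZMod.cast_id]
  rw [h]
  exact pow_mem (Subgroup.subset_closure (by simp)) _

lemma neg_mem' :
    Equiv.neg (ZMod n) ∈
      Subgroup.closure ({Equiv.addRight (1 : ZMod n), Equiv.neg (ZMod n)} :
        Set (Equiv.Perm (ZMod n))) :=
  Subgroup.subset_closure (by simp)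

/-- move any face to the base face `{0, k, k+1}`. -/
lemma to_base [NeZero n] (F : Finset (ZMod n)) (h : F ∈ Tfaces n k) :
    ∃ σ ∈ Subgroup.closure ({Equiv.addRight (1 : ZMod n), Equiv.neg (ZMod n)} :
        Set (Equiv.Perm (ZMod n))),
      F.image σ = ({0, (k : ZMod n), (k : ZMod n) + 1} : Finset (ZMod n)) := by
  obtain ⟨i, h | h⟩ := h <;> subst h
  · refine ⟨Equiv.addRight (-i), addRight_mem _, ?_⟩
    simp only [Finset.image_insert, Finset.image_singleton, Equiv.coe_addRight]
    exact triple_congr (by ring) (by ring) (by ring)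
  · refine ⟨Equiv.addRight (i + k + 1) * Equiv.neg (ZMod n),
      mul_mem (addRight_mem _) neg_mem', ?_⟩
    simp only [Finset.image_insert, Finset.image_singleton, Equiv.Perm.mul_apply,
      Equiv.neg_apply, Equiv.coe_addRight]
    rw [triple_comm]
    exact triple_congr (by ring) (by ring) (by ring)

/-- The natural map from the dihedral group to permutations. -/
def toPermFun (n : ℕ) : DihedralGroup n → Equiv.Perm (ZMod n)
  | .r i => Equiv.addRight i
  | .sr i => Equiv.addRight (-i) * Equiv.neg (ZMod n)

@[simp] lemma toPermFun_r (i : ZMod n) : toPermFun n (.r i) = Equiv.addRight i := rfl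
@[simp] lemma toPermFun_sr (i : ZMod n) :
    toPermFun n (.sr i) = Equiv.addRight (-i) * Equiv.neg (ZMod n) := rfl

def toPerm (n : ℕ) : DihedralGroup n →* Equiv.Perm (ZMod n) where
  toFun := toPermFun n
  map_one' := by
    rw [DihedralGroup.one_def]; ext x; simp [-DihedralGroup.r_zero]
  map_mul' := by
    rintro (i | i) (j | j) <;> ext x <;>
      simp [DihedralGroup.r_mul_r, DihedralGroup.r_mul_sr, DihedralGroup.sr_mul_r,
        DihedralGroup.sr_mul_sr, Equiv.Perm.mul_apply] <;> ring

lemma toPerm_injective (hn : 7 ≤ n) : Function.Injective (toPerm n) := by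
  haveI : NeZero n := ⟨by omega⟩
  have h2 : (2 : ZMod n) ≠ 0 := by
    have hc : ((2 : ℕ) : ZMod n) = (2 : ZMod n) := by norm_cast
    rw [← hc, Ne, ZMod.natCast_eq_zero_iff]
    intro hd
    exact absurd (Nat.le_of_dvd (by norm_num) hd) (by omega)
  rw [injective_iff_map_eq_one]
  rintro (i | i) h
  · have h0 := Equiv.congr_fun h 0
    simp [toPerm] at h0
    simp [DihedralGroup.one_def, h0, -DihedralGroup.r_zero]
  · have h0 := Equiv.congr_fun h 0
    have h1 := Equiv.congr_fun h 1
    simp [toPerm, Equiv.Perm.mul_apply] at h0 h1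
    rw [h0, neg_zero, add_zero] at h1
    exfalso
    apply h2
    rw [show (2 : ZMod n) = 1 - (-1) by ring, h1, sub_self]

lemma dihedral_gen [NeZero n] :
    Subgroup.closure ({DihedralGroup.r 1, DihedralGroup.sr 0} : Set (DihedralGroup n)) = ⊤ := by
  rw [eq_top_iff]
  rintro (i | i) -
  · have h : DihedralGroup.r i = DihedralGroup.r 1 ^ i.val := by
      rw [DihedralGroup.r_one_pow, ZMod.natCast_val, ZMod.cast_id]
    rw [h]
    exact pow_mem (Subgroup.subset_closure (by simp)) _
  · have h : DihedralGroup.sr i = DihedralGroup.sr 0 * DihedralGroup.r 1 ^ i.val := by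
      rw [DihedralGroup.r_one_pow, DihedralGroup.sr_mul_r, ZMod.natCast_val, ZMod.cast_id,
        zero_add]
    rw [h]
    exact mul_mem (Subgroup.subset_closure (by simp))
      (pow_mem (Subgroup.subset_closure (by simp)) _)

lemma toPerm_range [NeZero n] :
    (toPerm n).range =
      Subgroup.closure ({Equiv.addRight (1 : ZMod n), Equiv.neg (ZMod n)} :
        Set (Equiv.Perm (ZMod n))) := by
  rw [MonoidHom.range_eq_map, ← dihedral_gen (n := n), MonoidHom.map_closure]
  rw [Set.image_insert_eq, Set.image_singleton]
  have e1 : toPerm n (DihedralGroup.r 1) = Equiv.addRight (1 : ZMod n) := rfl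
  have e2 : toPerm n (DihedralGroup.sr 0) = Equiv.neg (ZMod n) := by
    ext x
    simp [toPerm, Equiv.Perm.mul_apply]
  rw [e1, e2]

end Aux

/-- For `n ≥ 7` and admissible `k`, the maps `i ↦ i+1` and `i ↦ -i` are automorphisms
of `T_{n,1,k}` generating a subgroup isomorphic to the dihedral group of order `2n`
which acts transitively on the faces. -/
theorem dihedral_acts_face_transitively (n k : ℕ) (hn : 7 ≤ n) (hk1 : 2 ≤ k)
    (hk2 : k ≤ n - 3) :
    IsAuto n k (Equiv.addRight (1 : ZMod n)) ∧
    IsAuto n k (Equiv.neg (ZMod n)) ∧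
    Nonempty
      ((Subgroup.closure ({Equiv.addRight (1 : ZMod n), Equiv.neg (ZMod n)} :
          Set (Equiv.Perm (ZMod n)))) ≃* DihedralGroup n) ∧
    ∀ F ∈ Tfaces n k, ∀ G ∈ Tfaces n k,
      ∃ σ ∈ Subgroup.closure ({Equiv.addRight (1 : ZMod n), Equiv.neg (ZMod n)} :
          Set (Equiv.Perm (ZMod n))), F.image σ = G := by
  haveI : NeZero n := ⟨by omega⟩
  refine ⟨?_, ?_, ?_, ?_⟩
  · intro F
    constructor
    · exact image_add 1 F
    · intro h
      have h2 := image_add (-1) _ h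
      rwa [Finset.image_image, show (⇑(Equiv.addRight (-1 : ZMod n)) ∘
        ⇑(Equiv.addRight (1 : ZMod n))) = id by ext x; simp, Finset.image_id] at h2
  · intro F
    constructor
    · exact image_neg F
    · intro h
      have h2 := image_neg _ h
      rwa [Finset.image_image, show (⇑(Equiv.neg (ZMod n)) ∘ ⇑(Equiv.neg (ZMod n))) = id by
        ext x; simp, Finset.image_id] at h2
  · exact ⟨(MulEquiv.subgroupCongr (toPerm_range (n := n)).symm).trans
      (MonoidHom.ofInjective (toPerm_injective hn)).symm⟩
  · intro F hF G hG
    obtain ⟨σF, hσF, hF'⟩ := to_base (k := k) F hF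
    obtain ⟨σG, hσG, hG'⟩ := to_base (k := k) G hG
    refine ⟨σG⁻¹ * σF, mul_mem (inv_mem hσG) hσF, ?_⟩
    have : F.image ⇑(σG⁻¹ * σF) = (F.image σF).image ⇑σG⁻¹ := by
      rw [Finset.image_image]; rfl
    rw [this, hF', ← hG', Finset.image_image,
      show ⇑σG⁻¹ ∘ ⇑σG = id by ext x; simp, Finset.image_id]
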